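/- Let T^k ⊆ {1,…,n} with |T^k| = Lk and δ_{Lk+1} ≤ δ_{Lk} such that δ_{Lk} < 1. Then for any index i ∉ T^k, the projection of φ_i onto span(Φ_{T^k}) satisfies ‖P_{T^k} φ_i‖₂² ≤ δ_{Lk+1}² / (1 − δ_{Lk}). -/

import Mathlib

open Finset Matrix

/-- Squared-entries `ℓ₂` norm of a finite real vector. -/
noncomputable def l2 {ι : Type*} [Fintype ι] (x : ι → ℝ) : ℝ :=
  Real.sqrt (∑ i, x i ^ 2)

/-- A vector is `K`-sparse if it has at most `K` nonzero entries. -/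
def Ksparse {n : ℕ} (K : ℕ) (x : Fin n → ℝ) : Prop :=
  (Finset.univ.filter (fun i => x i ≠ 0)).card ≤ K

/-- `δ` is a valid restricted isometry constant of order `K` for `Φ`. -/
def RIP {m n : ℕ} (Φ : Matrix (Fin m) (Fin n) ℝ) (K : ℕ) (δ : ℝ) : Prop :=
  ∀ x : Fin n → ℝ, Ksparse K x →
    (1 - δ) * ∑ i, x i ^ 2 ≤ ∑ i, (Φ.mulVec x) i ^ 2 ∧
    ∑ i, (Φ.mulVec x) i ^ 2 ≤ (1 + δ) * ∑ i, x i ^ 2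

/-- Column submatrix `Φ_S`. -/
def colSub {m n : ℕ} (Φ : Matrix (Fin m) (Fin n) ℝ) (S : Finset (Fin n)) :
    Matrix (Fin m) S ℝ := fun r c => Φ r c

/-- Gram matrix `Φ_S' Φ_S`. -/
noncomputable def gram {m n : ℕ} (Φ : Matrix (Fin m) (Fin n) ℝ) (S : Finset (Fin n)) :
    Matrix S S ℝ := (colSub Φ S)ᵀ * colSub Φ S

/-- Pseudoinverse `Φ_S^† = (Φ_S'Φ_S)⁻¹ Φ_S'` (for `Φ_S` of full column rank). -/
noncomputable def pinv {m n : ℕ} (Φ : Matrix (Fin m) (Fin n) ℝ) (S : Finset (Fin n)) :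
    Matrix S (Fin m) ℝ := (gram Φ S)⁻¹ * (colSub Φ S)ᵀ

/-- Projection `P_S = Φ_S Φ_S^†` onto the span of the columns of `Φ_S`. -/
noncomputable def proj {m n : ℕ} (Φ : Matrix (Fin m) (Fin n) ℝ) (S : Finset (Fin n)) :
    Matrix (Fin m) (Fin m) ℝ := colSub Φ S * pinv Φ S

/-- Projection `P_S^⊥ = I - P_S`. -/
noncomputable def projPerp {m n : ℕ} (Φ : Matrix (Fin m) (Fin n) ℝ) (S : Finset (Fin n)) :
    Matrix (Fin m) (Fin m) ℝ := 1 - proj Φ S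

section helpers
variable {m n : ℕ}

/-- extension by zero -/
def ext0 (Tk : Finset (Fin n)) (y : ↥Tk → ℝ) : Fin n → ℝ :=
  fun j => if h : j ∈ Tk then y ⟨j, h⟩ else 0

lemma ext0_mem (Tk : Finset (Fin n)) (y : ↥Tk → ℝ) (c : ↥Tk) : ext0 Tk y ↑c = y c := by
  simp [ext0]

lemma ext0_not_mem (Tk : Finset (Fin n)) (y : ↥Tk → ℝ) (j : Fin n) (h : j ∉ Tk) :
    ext0 Tk y j = 0 := by simp [ext0, h]

lemma sum_ext0_mul (Tk : Finset (Fin n)) (f : Fin n → ℝ) (y : ↥Tk → ℝ) :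
    ∑ j, f j * ext0 Tk y j = ∑ c : ↥Tk, f ↑c * y c := by
  have h1 : ∑ c : ↥Tk, f ↑c * y c = ∑ j ∈ Tk, f j * ext0 Tk y j := by
    rw [Finset.univ_eq_attach, ← Finset.sum_attach Tk (fun j => f j * ext0 Tk y j)]
    exact Finset.sum_congr rfl (fun c _ => by rw [ext0_mem])
  rw [h1]
  exact (Finset.sum_subset (Finset.subset_univ Tk)
    (fun j _ hj => by rw [ext0_not_mem _ _ _ hj, mul_zero])).symm

lemma sum_ext0_sq (Tk : Finset (Fin n)) (y : ↥Tk → ℝ) :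
    ∑ j, ext0 Tk y j ^ 2 = ∑ c : ↥Tk, y c ^ 2 := by
  simp only [sq]
  rw [sum_ext0_mul Tk (ext0 Tk y) y]
  exact Finset.sum_congr rfl fun c _ => by rw [ext0_mem]

lemma ext0_sparse (Tk : Finset (Fin n)) (y : ↥Tk → ℝ) (K : ℕ) (hK : Tk.card ≤ K) :
    Ksparse K (ext0 Tk y) := by
  refine le_trans (Finset.card_le_card ?_) hK
  intro j hj
  simp only [Finset.mem_filter] at hj
  by_contra h
  exact hj.2 (ext0_not_mem Tk y j h)

lemma mulVec_ext0 (Φ : Matrix (Fin m) (Fin n) ℝ) (Tk : Finset (Fin n)) (y : ↥Tk → ℝ) :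
    Φ.mulVec (ext0 Tk y) = (colSub Φ Tk).mulVec y := by
  funext r
  simp only [mulVec, dotProduct, colSub]
  exact sum_ext0_mul Tk (fun j => Φ r j) y

/-- transpose moves across dotProduct -/
lemma dot_mulVec_left {ι : Type*} [Fintype ι] (A : Matrix (Fin m) ι ℝ) (x : ι → ℝ)
    (z : Fin m → ℝ) : (A.mulVec x) ⬝ᵥ z = x ⬝ᵥ (Aᵀ.mulVec z) := by
  rw [dotProduct_comm, dotProduct_mulVec, ← mulVec_transpose, dotProduct_comm]

/-- lower RIP inequality for the submatrix -/
lemma lower_rip (Φ : Matrix (Fin m) (Fin n) ℝ) (Tk : Finset (Fin n)) (K : ℕ)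
    (hcard : Tk.card = K) (δ1 : ℝ) (hR1 : RIP Φ K δ1) (y : ↥Tk → ℝ) :
    (1 - δ1) * ∑ c, y c ^ 2 ≤ ∑ r, ((colSub Φ Tk).mulVec y) r ^ 2 := by
  have h := (hR1 (ext0 Tk y) (ext0_sparse Tk y K (le_of_eq hcard))).1
  rwa [sum_ext0_sq, mulVec_ext0] at h

/-- key cross bound from RIP of order K+1 -/
lemma cross_bound (Φ : Matrix (Fin m) (Fin n) ℝ) (Tk : Finset (Fin n)) (K : ℕ)
    (hcard : Tk.card = K) (δ2 : ℝ) (hδ0 : 0 ≤ δ2) (hR2 : RIP Φ (K + 1) δ2)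
    (i : Fin n) (hi : i ∉ Tk) (y : ↥Tk → ℝ) :
    ((colSub Φ Tk).mulVec y) ⬝ᵥ (fun r => Φ r i) ≤ δ2 * Real.sqrt (∑ c, y c ^ 2) := by
  set s : ℝ := ∑ c, y c ^ 2 with hs_def
  have hs : 0 ≤ s := Finset.sum_nonneg fun c _ => sq_nonneg _
  set t : ℝ := Real.sqrt s with ht_def
  have ht0 : 0 ≤ t := Real.sqrt_nonneg s
  have ht2 : t ^ 2 = s := Real.sq_sqrt hs
  rcases eq_or_lt_of_le ht0 with ht | ht
  · -- t = 0, so s = 0, y = 0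
    have hs0 : s = 0 := by rw [← ht2, ← ht]; ring
    have hy : y = 0 := by
      funext c
      have h2 := (Finset.sum_eq_zero_iff_of_nonneg
        (fun c (_ : c ∈ Finset.univ) => sq_nonneg (y c))).1 hs0 c (Finset.mem_univ c)
      exact pow_eq_zero_iff (two_ne_zero) |>.1 h2
    have hz : ((colSub Φ Tk).mulVec y) ⬝ᵥ (fun r => Φ r i) = 0 := by
      rw [hy]; simp
    rw [hz]
    positivity
  · -- t > 0
    set a : Fin n → ℝ := ext0 Tk y with ha_def
    set b : Fin n → ℝ := fun j => if j = i then t else 0 with hb_def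
    have hab : ∀ j, a j * b j = 0 := by
      intro j
      by_cases hj : j = i
      · have haz : a j = 0 := by
          rw [ha_def]; exact ext0_not_mem Tk y j (hj ▸ hi)
        rw [haz, zero_mul]
      · simp [hb_def, hj]
    have ha2 : ∑ j, a j ^ 2 = s := sum_ext0_sq Tk y
    have hb2 : ∑ j, b j ^ 2 = t ^ 2 := by
      simp only [hb_def]
      have hpt : ∀ j : Fin n, (if j = i then t else 0) ^ 2 = if j = i then t ^ 2 else 0 := by
        intro j; split <;> simp
      rw [Finset.sum_congr rfl fun j _ => hpt j,
        Finset.sum_ite_eq' Finset.univ i (fun _ => t ^ 2)]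
      simp
    have hplus : ∑ j, (a j + b j) ^ 2 = s + t ^ 2 := by
      have : ∀ j, (a j + b j) ^ 2 = a j ^ 2 + b j ^ 2 := by
        intro j; nlinarith [hab j]
      rw [Finset.sum_congr rfl fun j _ => this j, Finset.sum_add_distrib, ha2, hb2]
    have hminus : ∑ j, (a j - b j) ^ 2 = s + t ^ 2 := by
      have : ∀ j, (a j - b j) ^ 2 = a j ^ 2 + b j ^ 2 := by
        intro j; nlinarith [hab j]
      rw [Finset.sum_congr rfl fun j _ => this j, Finset.sum_add_distrib, ha2, hb2]
    have hsp : ∀ (g : Fin n → ℝ), (∀ j, j ∉ Tk → j ≠ i → g j = 0) → Ksparse (K + 1) g := by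
      intro g hg
      have hsub : Finset.univ.filter (fun j => g j ≠ 0) ⊆ insert i Tk := by
        intro j hj
        simp only [Finset.mem_filter] at hj
        by_contra hc
        simp only [Finset.mem_insert, not_or] at hc
        exact hj.2 (hg j hc.2 hc.1)
      calc (Finset.univ.filter (fun j => g j ≠ 0)).card ≤ (insert i Tk).card :=
            Finset.card_le_card hsub
        _ ≤ Tk.card + 1 := Finset.card_insert_le i Tk
        _ = K + 1 := by rw [hcard]
    have hsp_plus : Ksparse (K + 1) (fun j => a j + b j) := by
      refine hsp _ fun j hj hji => ?_
      simp only [ha_def, hb_def]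
      rw [ext0_not_mem Tk y j hj]; simp [hji]
    have hsp_minus : Ksparse (K + 1) (fun j => a j - b j) := by
      refine hsp _ fun j hj hji => ?_
      simp only [ha_def, hb_def]
      rw [ext0_not_mem Tk y j hj]; simp [hji]
    have hub := (hR2 (fun j => a j + b j) hsp_plus).2
    have hlb := (hR2 (fun j => a j - b j) hsp_minus).1
    rw [hplus] at hub
    rw [hminus] at hlb
    -- polarization
    have hΦadd : Φ.mulVec (fun j => a j + b j) = fun r => Φ.mulVec a r + Φ.mulVec b r := by
      have : (fun j => a j + b j) = a + b := rfl
      rw [this, Matrix.mulVec_add]; rfl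
    have hΦsub : Φ.mulVec (fun j => a j - b j) = fun r => Φ.mulVec a r - Φ.mulVec b r := by
      have : (fun j => a j - b j) = a - b := rfl
      rw [this, Matrix.mulVec_sub]; rfl
    have hpol : ∑ r, Φ.mulVec (fun j => a j + b j) r ^ 2
        - ∑ r, Φ.mulVec (fun j => a j - b j) r ^ 2
        = 4 * ((Φ.mulVec a) ⬝ᵥ (Φ.mulVec b)) := by
      rw [hΦadd, hΦsub]
      simp only [dotProduct]
      rw [← Finset.sum_sub_distrib, Finset.mul_sum]
      exact Finset.sum_congr rfl fun r _ => by ring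
    have hΦb : Φ.mulVec b = fun r => t * Φ r i := by
      funext r
      simp only [mulVec, dotProduct, hb_def, mul_ite, mul_zero]
      rw [Finset.sum_ite_eq' Finset.univ i (fun j => Φ r j * t)]
      simp [mul_comm]
    have hdot : (Φ.mulVec a) ⬝ᵥ (Φ.mulVec b) = t * ((Φ.mulVec a) ⬝ᵥ (fun r => Φ r i)) := by
      rw [hΦb]
      simp only [dotProduct, Finset.mul_sum]
      exact Finset.sum_congr rfl fun r _ => by ring
    have key : 4 * (t * ((Φ.mulVec a) ⬝ᵥ (fun r => Φ r i))) ≤ 2 * δ2 * (s + t ^ 2) := by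
      rw [← hdot, ← hpol]
      nlinarith [hub, hlb]
    have hmv : Φ.mulVec a = (colSub Φ Tk).mulVec y := mulVec_ext0 Φ Tk y
    rw [hmv] at key
    have ht2' : s = t ^ 2 := ht2.symm
    nlinarith [key, ht]

end helpers


lemma arith_nv (nv d : ℝ) (hnv0 : 0 ≤ nv) (hd : 0 ≤ d) (h : nv ^ 2 ≤ d * nv) : nv ≤ d := by
  nlinarith

lemma arith_nw (nw a e d : ℝ) (hnw0 : 0 ≤ nw) (he : 0 < e) (hd : 0 ≤ d)
    (hlow : e * nw ^ 2 ≤ a) (hup : a ≤ d * nw) : e * nw ≤ d := by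
  rcases eq_or_lt_of_le hnw0 with h0 | h0
  · rw [← h0]; simpa using hd
  · have h := le_trans hlow hup
    nlinarith

lemma arith_cs (a nw nv : ℝ) (ha : 0 ≤ a) (hnw0 : 0 ≤ nw) (hnv0 : 0 ≤ nv)
    (h : a ^ 2 ≤ nw ^ 2 * nv ^ 2) : a ≤ nw * nv := by
  nlinarith [mul_nonneg hnw0 hnv0]

lemma arith_final (a nv nw δ1 δ2 : ℝ) (h1δ : 0 < 1 - δ1) (hδ0 : 0 ≤ δ2)
    (hnv0 : 0 ≤ nv) (hnw0 : 0 ≤ nw) (hvb : nv ≤ δ2) (hwb : (1 - δ1) * nw ≤ δ2)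
    (hfin : a ≤ nw * nv) : a ≤ δ2 ^ 2 / (1 - δ1) := by
  have hnwb : nw ≤ δ2 / (1 - δ1) := by
    rw [le_div_iff₀ h1δ]; nlinarith
  calc a ≤ nw * nv := hfin
    _ ≤ (δ2 / (1 - δ1)) * δ2 := mul_le_mul hnwb hvb hnv0 (by positivity)
    _ = δ2 ^ 2 / (1 - δ1) := by ring

/-- Bound on the projection of a column onto the current active span:
`‖P_{T^k} φ_i‖₂² ≤ δ_{Lk+1}²/(1-δ_{Lk})` for `i ∉ T^k`. -/
theorem proj_column_bound {m n : ℕ} (Φ : Matrix (Fin m) (Fin n) ℝ)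
    (hunit : ∀ j, ∑ r, Φ r j ^ 2 = 1)
    (L k : ℕ) (Tk : Finset (Fin n)) (hcard : Tk.card = L * k)
    (δ1 δ2 : ℝ) (hδ0 : 0 ≤ δ2) (hle : δ2 ≤ δ1) (hδ1 : δ1 < 1)
    (hR1 : RIP Φ (L * k) δ1) (hR2 : RIP Φ (L * k + 1) δ2)
    (i : Fin n) (hi : i ∉ Tk) :
    l2 ((proj Φ Tk).mulVec (fun r => Φ r i)) ^ 2 ≤ δ2 ^ 2 / (1 - δ1) := by
  have h1δ : (0:ℝ) < 1 - δ1 := by linarith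
  set A : Matrix (Fin m) (↥Tk) ℝ := colSub Φ Tk with hA
  set G : Matrix (↥Tk) (↥Tk) ℝ := gram Φ Tk with hG
  set φc : Fin m → ℝ := fun r => Φ r i with hφc
  set v : ↥Tk → ℝ := Aᵀ.mulVec φc with hv
  -- G is positive definite, hence invertible
  have hquad : ∀ x : ↥Tk → ℝ, x ⬝ᵥ G.mulVec x = (A.mulVec x) ⬝ᵥ (A.mulVec x) := by
    intro x
    rw [hG, _root_.gram, ← hA, ← Matrix.mulVec_mulVec, ← dot_mulVec_left]
  have hlow : ∀ x : ↥Tk → ℝ, (1 - δ1) * ∑ c, x c ^ 2 ≤ (A.mulVec x) ⬝ᵥ (A.mulVec x) := by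
    intro x
    have := lower_rip Φ Tk (L * k) hcard δ1 hR1 x
    have hdp : (A.mulVec x) ⬝ᵥ (A.mulVec x) = ∑ r, (A.mulVec x) r ^ 2 := by
      simp [dotProduct, sq]
    rw [hdp]
    exact this
  have hPD : G.PosDef := by
    refine Matrix.PosDef.of_dotProduct_mulVec_pos ?_ ?_
    · -- Hermitian
      have := Matrix.isHermitian_conjTranspose_mul_self (colSub Φ Tk)
      simpa [hG, _root_.gram] using this
    · intro x hx
      have hxs : 0 < ∑ c, x c ^ 2 := by
        obtain ⟨c, hc⟩ := Function.ne_iff.1 hx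
        exact Finset.sum_pos' (fun c _ => sq_nonneg _)
          ⟨c, Finset.mem_univ c, lt_of_le_of_ne (sq_nonneg _) (Ne.symm (pow_ne_zero 2 hc))⟩
      have := lt_of_lt_of_le (mul_pos h1δ hxs) (hlow x)
      rw [← hquad x] at this
      simpa using this
  have hdet : IsUnit G.det := isUnit_iff_ne_zero.2 (ne_of_gt hPD.det_pos)
  set w : ↥Tk → ℝ := (G⁻¹).mulVec v with hw
  have hGw : G.mulVec w = v := by
    rw [hw, Matrix.mulVec_mulVec, Matrix.mul_nonsing_inv G hdet, Matrix.one_mulVec]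
  -- the projected vector
  have hproj : (proj Φ Tk).mulVec φc = A.mulVec w := by
    rw [proj, pinv, ← hG, ← hA, ← Matrix.mulVec_mulVec, ← Matrix.mulVec_mulVec,
      ← hv, ← hw]
  -- norms
  set nv : ℝ := Real.sqrt (∑ c, v c ^ 2) with hnv
  set nw : ℝ := Real.sqrt (∑ c, w c ^ 2) with hnw
  have hnv0 : 0 ≤ nv := Real.sqrt_nonneg _
  have hnw0 : 0 ≤ nw := Real.sqrt_nonneg _
  have hnv2 : nv ^ 2 = ∑ c, v c ^ 2 := Real.sq_sqrt (Finset.sum_nonneg fun c _ => sq_nonneg _)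
  have hnw2 : nw ^ 2 = ∑ c, w c ^ 2 := Real.sq_sqrt (Finset.sum_nonneg fun c _ => sq_nonneg _)
  -- cross bounds
  have hcrossv := cross_bound Φ Tk (L * k) hcard δ2 hδ0 hR2 i hi v
  have hcrossw := cross_bound Φ Tk (L * k) hcard δ2 hδ0 hR2 i hi w
  have hAv : (A.mulVec v) ⬝ᵥ φc = ∑ c, v c ^ 2 := by
    rw [dot_mulVec_left, ← hv]
    simp [dotProduct, sq]
  have hAw : (A.mulVec w) ⬝ᵥ φc = w ⬝ᵥ v := by
    rw [dot_mulVec_left, ← hv, dotProduct_comm]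
  -- ‖v‖ ≤ δ2
  have hvb : nv ≤ δ2 := by
    have h := hcrossv
    rw [← hA, ← hφc] at h
    rw [hAv] at h
    rw [← hnv] at h
    rw [← hnv2] at h
    exact arith_nv nv δ2 hnv0 hδ0 h
  -- (1-δ1)‖w‖² ≤ w⬝v ≤ δ2‖w‖
  have hwv_low : (1 - δ1) * nw ^ 2 ≤ w ⬝ᵥ v := by
    have h := hlow w
    rw [← hquad w, hGw] at h
    rw [hnw2]
    exact h
  have hwv_up : w ⬝ᵥ v ≤ δ2 * nw := by
    have h := hcrossw
    rw [← hA, ← hφc, hAw, ← hnw] at h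
    exact h
  have hwv_nonneg : 0 ≤ w ⬝ᵥ v := by
    have h := hlow w
    rw [← hquad w, hGw] at h
    exact le_trans (mul_nonneg (le_of_lt h1δ)
      (Finset.sum_nonneg (fun c _ => sq_nonneg (w c)))) h
  -- ‖w‖ ≤ δ2/(1-δ1)
  have hwb : (1 - δ1) * nw ≤ δ2 := arith_nw nw (w ⬝ᵥ v) (1 - δ1) δ2 hnw0 h1δ hδ0 hwv_low hwv_up
  -- Cauchy-Schwarz
  have hCS : (w ⬝ᵥ v) ^ 2 ≤ nw ^ 2 * nv ^ 2 := by
    rw [hnw2, hnv2]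
    exact Finset.sum_mul_sq_le_sq_mul_sq Finset.univ w v
  have hfinal : w ⬝ᵥ v ≤ nw * nv := arith_cs (w ⬝ᵥ v) nw nv hwv_nonneg hnw0 hnv0 hCS
  -- conclude
  rw [hproj]
  have hl2 : l2 (A.mulVec w) ^ 2 = (A.mulVec w) ⬝ᵥ (A.mulVec w) := by
    rw [l2, Real.sq_sqrt (Finset.sum_nonneg fun r _ => sq_nonneg _)]
    simp [dotProduct, sq]
  rw [hl2, ← hquad w, hGw]
  exact arith_final (w ⬝ᵥ v) nv nw δ1 δ2 h1δ hδ0 hnv0 hnw0 hvb hwb hfinal
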